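/- Let n ≥ 2, let L₁, L₂ ⊂ V = 𝔽₂^{2n} be Lagrangian subspaces with κ = dim(L₁ ∩ L₂), and let 0 ≤ m ≤ n. Then the average of |S ∩ L₂|² over all m-dimensional isotropic subspaces S of V satisfying S ∩ L₁ = {0} equals μ(n,κ,m) := 1 + 3(1 − 2^{κ−n})·(2^m − 1)/(2^n − 1) + 2(1 − 2^{κ−n})(1 − 2^{κ−n+1})·((2^m − 1)(2^{m−1} − 1))/((2^n − 1)(2^{n−1} − 1)), and moreover μ(n,κ,m) ≤ 1 + 3·2^{m−n} + 2^{2m−2n+1}. -/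

import Mathlib

/-- The field with two elements. -/
abbrev F2 := ZMod 2

/-- The phase space `V = 𝔽₂ⁿ × 𝔽₂ⁿ`. -/
abbrev V (n : ℕ) : Type := (Fin n → F2) × (Fin n → F2)

/-- The symplectic form `[a,b] = aₓ·b_z + a_z·bₓ` on `V n`. -/
def symp {n : ℕ} (a b : V n) : F2 :=
  (∑ i, a.1 i * b.2 i) + (∑ i, a.2 i * b.1 i)

/-- A subspace is isotropic if the symplectic form vanishes on it. -/
def IsIsotropic {n : ℕ} (S : Submodule F2 (V n)) : Prop :=
  ∀ x ∈ S, ∀ y ∈ S, symp x y = 0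

/-- A Lagrangian subspace is an isotropic subspace of dimension `n`. -/
def IsLagrangian {n : ℕ} (S : Submodule F2 (V n)) : Prop :=
  IsIsotropic S ∧ Module.finrank F2 S = n

/-- The quantity `μ(n,κ,m)` of Lemma "mu":
`1 + 3(1−2^{κ−n})·(2^m−1)/(2^n−1)
 + 2(1−2^{κ−n})(1−2^{κ−n+1})·((2^m−1)(2^{m−1}−1))/((2^n−1)(2^{n−1}−1))`. -/
def mu (n κ m : ℕ) : ℚ :=
  1 + 3 * (1 - (2 : ℚ) ^ ((κ : ℤ) - (n : ℤ))) * (((2 : ℚ) ^ m - 1) / ((2 : ℚ) ^ n - 1))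
    + 2 * (1 - (2 : ℚ) ^ ((κ : ℤ) - (n : ℤ))) * (1 - (2 : ℚ) ^ ((κ : ℤ) - (n : ℤ) + 1)) *
        ((((2 : ℚ) ^ m - 1) * ((2 : ℚ) ^ ((m : ℤ) - 1) - 1)) /
          (((2 : ℚ) ^ n - 1) * ((2 : ℚ) ^ ((n : ℤ) - 1) - 1)))

open Module Submodule Finset

namespace Stmt5Aux

lemma symp_add_left {n : ℕ} (a b c : V n) : symp (a + b) c = symp a c + symp b c := by
  simp only [symp, Prod.fst_add, Prod.snd_add, Pi.add_apply, add_mul, Finset.sum_add_distrib]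
  ring

lemma symp_add_right {n : ℕ} (a b c : V n) : symp a (b + c) = symp a b + symp a c := by
  simp only [symp, Prod.fst_add, Prod.snd_add, Pi.add_apply, mul_add, Finset.sum_add_distrib]
  ring

lemma symp_smul_left {n : ℕ} (t : F2) (a c : V n) : symp (t • a) c = t * symp a c := by
  simp only [symp, Prod.smul_fst, Prod.smul_snd, Pi.smul_apply, smul_eq_mul, mul_assoc,
    ← Finset.mul_sum, mul_add]

lemma symp_smul_right' {n : ℕ} (t : F2) (a c : V n) : symp a (t • c) = t * symp a c := by
  have comm : ∀ x y : V n, symp x y = symp y x := by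
    intro x y
    simp only [symp]
    rw [add_comm]
    congr 1 <;> exact Finset.sum_congr rfl fun i _ => mul_comm _ _
  rw [comm, symp_smul_left, comm]

lemma symp_comm {n : ℕ} (a b : V n) : symp a b = symp b a := by
  simp only [symp]
  rw [add_comm]
  congr 1 <;> exact Finset.sum_congr rfl fun i _ => mul_comm _ _

lemma symp_self {n : ℕ} (a : V n) : symp a a = 0 := by
  have : (∑ i, a.1 i * a.2 i) = (∑ i, a.2 i * a.1 i) :=
    Finset.sum_congr rfl fun i _ => mul_comm _ _
  rw [symp, this, CharTwo.add_self_eq_zero]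

/-- The symplectic form as a bilinear map. -/
noncomputable def B (n : ℕ) : LinearMap.BilinForm F2 (V n) :=
  LinearMap.mk₂ F2 symp symp_add_left (fun t a c => by rw [symp_smul_left]; rfl)
    symp_add_right (fun t a c => by rw [symp_smul_right']; rfl)

@[simp] lemma B_apply {n : ℕ} (a b : V n) : B n a b = symp a b := rfl

lemma B_refl {n : ℕ} : (B n).IsRefl := fun a b h => by
  simpa [symp_comm a b] using h

lemma B_nondeg {n : ℕ} : (B n).Nondegenerate := by
  have hLeft : (B n).SeparatingLeft := by
    intro a h
    have h1 : ∀ i, a.1 i = 0 := by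
      intro i
      have := h (0, Pi.single i 1)
      simpa [symp, Pi.single_apply, Finset.sum_ite_eq'] using this
    have h2 : ∀ i, a.2 i = 0 := by
      intro i
      have := h (Pi.single i 1, 0)
      simpa [symp, Pi.single_apply, Finset.sum_ite_eq'] using this
    ext i
    · exact h1 i
    · exact h2 i
  exact ⟨hLeft, fun a h => hLeft a fun y => B_refl y a (h y)⟩

lemma finrank_V (n : ℕ) : finrank F2 (V n) = 2 * n := by
  have : finrank F2 (V n) = finrank F2 (Fin n → F2) + finrank F2 (Fin n → F2) :=
    Module.finrank_prod
  rw [this, Module.finrank_fintype_fun_eq_card, Fintype.card_fin, two_mul]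

/-- orthogonal complement w.r.t. the symplectic form -/
noncomputable def perp {n : ℕ} (T : Submodule F2 (V n)) : Submodule F2 (V n) :=
  (B n).orthogonal T

lemma mem_perp {n : ℕ} {T : Submodule F2 (V n)} {x : V n} :
    x ∈ perp T ↔ ∀ t ∈ T, symp t x = 0 := Iff.rfl

lemma finrank_perp {n : ℕ} (T : Submodule F2 (V n)) :
    finrank F2 (perp T) = 2 * n - finrank F2 T := by
  rw [perp, LinearMap.BilinForm.finrank_orthogonal B_nondeg, finrank_V]

lemma isotropic_le_perp {n : ℕ} {T : Submodule F2 (V n)} (h : IsIsotropic T) : T ≤ perp T :=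
  fun x hx => mem_perp.2 fun t ht => h t ht x hx

lemma perp_lagrangian {n : ℕ} {L : Submodule F2 (V n)} (hL : IsLagrangian L) : perp L = L := by
  refine (Submodule.eq_of_le_of_finrank_le (isotropic_le_perp hL.1) ?_).symm
  rw [finrank_perp, hL.2]
  omega

lemma perp_sup {n : ℕ} (T L : Submodule F2 (V n)) : perp (T ⊔ L) = perp T ⊓ perp L := by
  ext x
  simp only [Submodule.mem_inf, mem_perp]
  constructor
  · exact fun h => ⟨fun t ht => h t (le_sup_left (a := T) (b := L) ht),
      fun l hl => h l (le_sup_right (a := T) (b := L) hl)⟩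
  · rintro ⟨h1, h2⟩ v hv
    obtain ⟨t, ht, l, hl, rfl⟩ := Submodule.mem_sup.1 hv
    rw [symp_add_left, h1 t ht, h2 l hl, add_zero]

lemma card_submodule {n : ℕ} (W : Submodule F2 (V n)) :
    Nat.card W = 2 ^ finrank F2 W := by
  classical
  have b := Module.finBasis F2 W
  rw [Nat.card_congr b.equivFun.toEquiv, Nat.card_pi]
  simp [Nat.card_eq_fintype_card]

end Stmt5Aux

namespace Stmt5Aux

lemma f2_cases (s : F2) : s = 0 ∨ s = 1 := by revert s; decide

lemma sup_span_isotropic {n : ℕ} {T : Submodule F2 (V n)} {c : V n}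
    (hT : IsIsotropic T) (hc : c ∈ perp T) : IsIsotropic (T ⊔ Submodule.span F2 {c}) := by
  have comm := fun x y : V n => symp_comm x y
  intro x hx y hy
  obtain ⟨t, ht, u, hu, rfl⟩ := Submodule.mem_sup.1 hx
  obtain ⟨s, rfl⟩ := Submodule.mem_span_singleton.1 hu
  obtain ⟨t', ht', u', hu', rfl⟩ := Submodule.mem_sup.1 hy
  obtain ⟨s', rfl⟩ := Submodule.mem_span_singleton.1 hu'
  have hc' : ∀ u ∈ T, symp u c = 0 := hc
  simp only [symp_add_left, symp_add_right, symp_smul_left, symp_smul_right']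
  rw [hT t ht t' ht', hc' t ht, comm c t', hc' t' ht', symp_self]
  ring

lemma sup_span_inf_bot {n : ℕ} {T L₁ : Submodule F2 (V n)} {c : V n}
    (hTL : T ⊓ L₁ = ⊥) (hc : c ∉ T ⊔ L₁) : (T ⊔ Submodule.span F2 {c}) ⊓ L₁ = ⊥ := by
  rw [eq_bot_iff]
  rintro x ⟨hx1, hx2⟩
  obtain ⟨t, ht, u, hu, rfl⟩ := Submodule.mem_sup.1 hx1
  obtain ⟨s, rfl⟩ := Submodule.mem_span_singleton.1 hu
  rcases f2_cases s with rfl | rfl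
  · have : t ∈ T ⊓ L₁ := ⟨ht, by simpa using hx2⟩
    rw [hTL] at this
    simpa using this
  · exfalso
    apply hc
    rw [one_smul] at hx2
    have : (-t) + (t + c) = c := by abel
    exact this ▸ Submodule.add_mem_sup (Submodule.neg_mem _ ht) hx2

lemma span_singleton_inf_bot {n : ℕ} {T : Submodule F2 (V n)} {c : V n}
    (hcT : c ∉ T) : T ⊓ Submodule.span F2 {c} = ⊥ := by
  rw [eq_bot_iff]
  rintro x ⟨hx1, hx2⟩
  obtain ⟨s, rfl⟩ := Submodule.mem_span_singleton.1 hx2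
  rcases f2_cases s with rfl | rfl
  · simp
  · rw [one_smul] at hx1; exact absurd hx1 hcT

lemma finrank_sup_span {n : ℕ} {T : Submodule F2 (V n)} {c : V n}
    (hc0 : c ≠ 0) (hcT : c ∉ T) :
    finrank F2 (T ⊔ Submodule.span F2 {c} : Submodule F2 (V n)) = finrank F2 T + 1 := by
  have h := Submodule.finrank_sup_add_finrank_inf_eq T (Submodule.span F2 {c})
  rw [span_singleton_inf_bot hcT, finrank_bot, finrank_span_singleton hc0] at h
  omega

/-- number of m-dim isotropic subspaces S ⊇ T with S ⊓ L₁ = ⊥ -/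
noncomputable def NN (n m : ℕ) (L₁ T : Submodule F2 (V n)) : ℕ :=
  Nat.card {S : Submodule F2 (V n) //
    (IsIsotropic S ∧ finrank F2 S = m ∧ S ⊓ L₁ = ⊥) ∧ T ≤ S}

/-- the predicted value of NN for dim T = k -/
noncomputable def Gk (n m k : ℕ) : ℚ :=
  if k ≤ m then
    ∏ j ∈ Finset.Ico k m, (((2:ℚ) ^ (2*n - j) - 2 ^ n) / ((2:ℚ) ^ m - 2 ^ j))
  else 0

lemma NN_high {n m : ℕ} {L₁ T : Submodule F2 (V n)} (h : m < finrank F2 T) :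
    NN n m L₁ T = 0 := by
  rw [NN, Nat.card_eq_zero]
  left
  refine ⟨fun x => ?_⟩
  obtain ⟨S, ⟨_, hSm, _⟩, hTS⟩ := x
  have : finrank F2 T ≤ finrank F2 S := Submodule.finrank_mono hTS
  omega

lemma extension_mem {n m : ℕ} {L₁ T S : Submodule F2 (V n)} {c : V n}
    (hS : IsIsotropic S ∧ finrank F2 S = m ∧ S ⊓ L₁ = ⊥) (hTS : T ≤ S)
    (hcS : c ∈ S) (hcT : c ∉ T) : c ∈ perp T ∧ c ∉ T ⊔ L₁ := by
  constructor
  · exact mem_perp.2 fun t ht => hS.1 t (hTS ht) c hcS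
  · intro h
    obtain ⟨t, ht, l, hl, hsum⟩ := Submodule.mem_sup.1 h
    have hlS : l ∈ S ⊓ L₁ := ⟨by
      have : l = c - t := by rw [← hsum]; abel
      rw [this]; exact Submodule.sub_mem S hcS (hTS ht), hl⟩
    rw [hS.2.2] at hlS
    have : l = 0 := by simpa using hlS
    apply hcT
    rw [← hsum, this, add_zero]
    exact ht

lemma finrank_perp_inter {n : ℕ} {L₁ T : Submodule F2 (V n)}
    (hL₁ : IsLagrangian L₁) (hT : IsIsotropic T) (hTL : T ⊓ L₁ = ⊥)
    (hk : finrank F2 T ≤ n) :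
    finrank F2 (perp T ⊓ (T ⊔ L₁) : Submodule F2 (V n)) = n := by
  have hTsupL : finrank F2 (T ⊔ L₁ : Submodule F2 (V n)) = finrank F2 T + n := by
    have h := Submodule.finrank_sup_add_finrank_inf_eq T L₁
    rw [hTL, finrank_bot, hL₁.2] at h
    omega
  have heq : perp T ⊓ (T ⊔ L₁) = T ⊔ (L₁ ⊓ perp T) := by
    apply le_antisymm
    · rintro x ⟨hx1, hx2⟩
      obtain ⟨t, ht, l, hl, hsum⟩ := Submodule.mem_sup.1 hx2
      have hlperp : l ∈ perp T := by
        have : l = x - t := by rw [← hsum]; abel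
        rw [this]
        exact Submodule.sub_mem _ hx1 (isotropic_le_perp hT ht)
      rw [← hsum]
      exact Submodule.add_mem_sup ht ⟨hl, hlperp⟩
    · apply sup_le
      · exact le_inf (isotropic_le_perp hT) le_sup_left
      · exact le_inf inf_le_right (le_trans inf_le_left le_sup_right)
  have hLperp : L₁ ⊓ perp T = perp (T ⊔ L₁) := by
    rw [perp_sup, perp_lagrangian hL₁, inf_comm]
  have h1 : finrank F2 (L₁ ⊓ perp T : Submodule F2 (V n)) = n - finrank F2 T := by
    rw [hLperp, finrank_perp, hTsupL]
    omega
  have h2 : T ⊓ (L₁ ⊓ perp T) = ⊥ := by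
    rw [eq_bot_iff, ← hTL]
    exact le_inf inf_le_left (le_trans inf_le_right inf_le_left)
  have h3 := Submodule.finrank_sup_add_finrank_inf_eq T (L₁ ⊓ perp T)
  rw [h2, finrank_bot, h1] at h3
  rw [heq]
  omega

end Stmt5Aux

namespace Stmt5Aux

lemma two_pow_lt {k m : ℕ} (h : k < m) : (2:ℚ)^k < 2^m := by
  have : (2:ℕ)^k < 2^m := Nat.pow_lt_pow_right (by norm_num) h
  exact_mod_cast this

lemma two_pow_le {k m : ℕ} (h : k ≤ m) : (2:ℚ)^k ≤ 2^m := by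
  have : (2:ℕ)^k ≤ 2^m := Nat.pow_le_pow_right (by norm_num) h
  exact_mod_cast this

lemma NN_eq {n m : ℕ} (hm : m ≤ n) (L₁ : Submodule F2 (V n)) (hL₁ : IsLagrangian L₁) :
    ∀ d : ℕ, ∀ T : Submodule F2 (V n), IsIsotropic T → T ⊓ L₁ = ⊥ →
      finrank F2 T + d = m →
      (NN n m L₁ T : ℚ) = ∏ j ∈ Finset.Ico (finrank F2 T) m,
        (((2:ℚ) ^ (2*n - j) - 2 ^ n) / ((2:ℚ) ^ m - 2 ^ j)) := by
  intro d
  induction d with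
  | zero =>
    intro T hT hTL hrk
    have hfr : finrank F2 T = m := by omega
    rw [hfr, Finset.Ico_self, Finset.prod_empty]
    have h1 : NN n m L₁ T = 1 := by
      rw [NN, Nat.card_eq_one_iff_unique]
      refine ⟨⟨?_⟩, ⟨T, ⟨hT, hfr, hTL⟩, le_refl T⟩⟩
      rintro ⟨S1, ⟨⟨-, hS1m, -⟩, hTS1⟩⟩ ⟨S2, ⟨⟨-, hS2m, -⟩, hTS2⟩⟩
      have e1 : T = S1 := Submodule.eq_of_le_of_finrank_le hTS1 (by omega)
      have e2 : T = S2 := Submodule.eq_of_le_of_finrank_le hTS2 (by omega)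
      simp [← e1, ← e2]
    rw [h1]; norm_num
  | succ d ih =>
    intro T hT hTL hrk
    classical
    haveI : Fintype (Submodule F2 (V n)) := Fintype.ofFinite _
    set k := finrank F2 T with hk
    have hkm : k < m := by omega
    have card_filter_mem : ∀ W : Submodule F2 (V n),
        (Finset.univ.filter (fun c : V n => c ∈ W)).card = 2 ^ finrank F2 W := by
      intro W
      rw [← Fintype.card_subtype, ← Nat.card_eq_fintype_card, card_submodule]
    set 𝒮 : Finset (Submodule F2 (V n)) :=
      Finset.univ.filter
        (fun S => (IsIsotropic S ∧ finrank F2 S = m ∧ S ⊓ L₁ = ⊥) ∧ T ≤ S) with h𝒮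
    have hNN : ∀ T' : Submodule F2 (V n), NN n m L₁ T' =
        (Finset.univ.filter
          (fun S => (IsIsotropic S ∧ finrank F2 S = m ∧ S ⊓ L₁ = ⊥) ∧ T' ≤ S)).card := by
      intro T'
      rw [NN, Nat.card_eq_fintype_card, Fintype.card_subtype]
    have step1 : ∀ S ∈ 𝒮,
        (Finset.univ.filter (fun c : V n => c ∈ S ∧ c ∉ T)).card = 2^m - 2^k := by
      intro S hS
      rw [h𝒮, Finset.mem_filter] at hS
      obtain ⟨-, ⟨hSi, hSm, hSL⟩, hTS⟩ := hS
      have hsub : Finset.univ.filter (fun c : V n => c ∈ T)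
          ⊆ Finset.univ.filter (fun c : V n => c ∈ S) := by
        intro c hc
        simp only [Finset.mem_filter, Finset.mem_univ, true_and] at *
        exact hTS hc
      have heq : Finset.univ.filter (fun c : V n => c ∈ S ∧ c ∉ T)
          = Finset.univ.filter (fun c : V n => c ∈ S)
            \ Finset.univ.filter (fun c : V n => c ∈ T) := by
        ext c
        simp only [Finset.mem_filter, Finset.mem_sdiff, Finset.mem_univ, true_and]
      rw [heq, Finset.card_sdiff_of_subset hsub, card_filter_mem, card_filter_mem, hSm, ← hk]
    have step2 : ∀ c : V n, (𝒮.filter (fun S => c ∈ S ∧ c ∉ T)).card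
        = if c ∈ perp T ∧ c ∉ T ⊔ L₁ then NN n m L₁ (T ⊔ Submodule.span F2 {c}) else 0 := by
      intro c
      by_cases hc : c ∈ perp T ∧ c ∉ T ⊔ L₁
      · rw [if_pos hc]
        have hcT : c ∉ T := fun h => hc.2 (Submodule.mem_sup_left h)
        have heq : 𝒮.filter (fun S => c ∈ S ∧ c ∉ T)
            = Finset.univ.filter (fun S => (IsIsotropic S ∧ finrank F2 S = m ∧ S ⊓ L₁ = ⊥)
                ∧ T ⊔ Submodule.span F2 {c} ≤ S) := by
          ext S
          rw [h𝒮]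
          simp only [Finset.mem_filter, Finset.mem_univ, true_and]
          constructor
          · rintro ⟨⟨hP, hTS⟩, hcS, -⟩
            exact ⟨hP, sup_le hTS ((Submodule.span_singleton_le_iff_mem c S).2 hcS)⟩
          · rintro ⟨hP, hle⟩
            refine ⟨⟨hP, le_trans le_sup_left hle⟩,
              hle (Submodule.mem_sup_right (Submodule.mem_span_singleton_self c)), hcT⟩
        rw [heq, ← hNN]
      · rw [if_neg hc, Finset.card_eq_zero, Finset.filter_eq_empty_iff]
        intro S hS hcontra
        rw [h𝒮, Finset.mem_filter] at hS
        exact hc (extension_mem hS.2.1 hS.2.2 hcontra.1 hcontra.2)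
    have swap : ∑ S ∈ 𝒮, (Finset.univ.filter (fun c : V n => c ∈ S ∧ c ∉ T)).card
        = ∑ c : V n, (𝒮.filter (fun S => c ∈ S ∧ c ∉ T)).card := by
      simp_rw [Finset.card_filter]
      exact Finset.sum_comm
    have natid : 𝒮.card * (2^m - 2^k)
        = ∑ c : V n, (if c ∈ perp T ∧ c ∉ T ⊔ L₁
            then NN n m L₁ (T ⊔ Submodule.span F2 {c}) else 0) := by
      rw [← Finset.sum_congr rfl (fun c _ => step2 c), ← swap, Finset.sum_congr rfl step1,
        Finset.sum_const, smul_eq_mul]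
    -- evaluate the ite sum in ℚ using the inductive hypothesis
    set Gp : ℚ := ∏ j ∈ Finset.Ico (k+1) m,
      (((2:ℚ) ^ (2*n - j) - 2 ^ n) / ((2:ℚ) ^ m - 2 ^ j)) with hGp
    have key3 : ∀ c : V n, ((if c ∈ perp T ∧ c ∉ T ⊔ L₁
        then NN n m L₁ (T ⊔ Submodule.span F2 {c}) else 0 : ℕ) : ℚ)
        = if c ∈ perp T ∧ c ∉ T ⊔ L₁ then Gp else 0 := by
      intro c
      by_cases hc : c ∈ perp T ∧ c ∉ T ⊔ L₁
      · rw [if_pos hc, if_pos hc]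
        have hc0 : c ≠ 0 := fun h => hc.2 (h ▸ Submodule.zero_mem _)
        have hcT : c ∉ T := fun h => hc.2 (Submodule.mem_sup_left h)
        have hfr : finrank F2 (T ⊔ Submodule.span F2 {c} : Submodule F2 (V n)) = k + 1 :=
          finrank_sup_span hc0 hcT
        have := ih (T ⊔ Submodule.span F2 {c}) (sup_span_isotropic hT hc.1)
          (sup_span_inf_bot hTL hc.2) (by omega)
        rw [this, hfr, hGp]
      · rw [if_neg hc, if_neg hc, Nat.cast_zero]
    have hCcard : (Finset.univ.filter
        (fun c : V n => c ∈ perp T ∧ c ∉ T ⊔ L₁)).card = 2^(2*n - k) - 2^n := by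
      have hsub : Finset.univ.filter (fun c : V n => c ∈ perp T ⊓ (T ⊔ L₁))
          ⊆ Finset.univ.filter (fun c : V n => c ∈ perp T) := by
        intro c hc
        simp only [Finset.mem_filter, Finset.mem_univ, true_and, Submodule.mem_inf] at *
        exact hc.1
      have heq : Finset.univ.filter (fun c : V n => c ∈ perp T ∧ c ∉ T ⊔ L₁)
          = Finset.univ.filter (fun c : V n => c ∈ perp T)
            \ Finset.univ.filter (fun c : V n => c ∈ perp T ⊓ (T ⊔ L₁)) := by
        ext c
        simp only [Finset.mem_filter, Finset.mem_sdiff, Finset.mem_univ, true_and,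
          Submodule.mem_inf]
        tauto
      rw [heq, Finset.card_sdiff_of_subset hsub, card_filter_mem, card_filter_mem, finrank_perp,
        finrank_perp_inter hL₁ hT hTL (by omega), ← hk]
    -- the main rational identity
    have hmain : (NN n m L₁ T : ℚ) * ((2:ℚ)^m - 2^k)
        = (((2:ℚ)^(2*n - k) - 2^n)) * Gp := by
      have c1 : ((2^m - 2^k : ℕ) : ℚ) = (2:ℚ)^m - 2^k := by
        rw [Nat.cast_sub (Nat.pow_le_pow_right (by norm_num) (le_of_lt hkm))]
        push_cast; ring
      have c2 : ((2^(2*n - k) - 2^n : ℕ) : ℚ) = (2:ℚ)^(2*n - k) - 2^n := by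
        rw [Nat.cast_sub (Nat.pow_le_pow_right (by norm_num) (by omega))]
        push_cast; ring
      calc (NN n m L₁ T : ℚ) * ((2:ℚ)^m - 2^k)
          = ((NN n m L₁ T * (2^m - 2^k) : ℕ) : ℚ) := by rw [Nat.cast_mul, c1]
        _ = ((𝒮.card * (2^m - 2^k) : ℕ) : ℚ) := by rw [hNN]
        _ = ((∑ c : V n, (if c ∈ perp T ∧ c ∉ T ⊔ L₁
              then NN n m L₁ (T ⊔ Submodule.span F2 {c}) else 0) : ℕ) : ℚ) := by rw [natid]
        _ = ∑ c : V n, ((if c ∈ perp T ∧ c ∉ T ⊔ L₁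
              then NN n m L₁ (T ⊔ Submodule.span F2 {c}) else 0 : ℕ) : ℚ) := by
            rw [Nat.cast_sum]
        _ = ∑ c : V n, (if c ∈ perp T ∧ c ∉ T ⊔ L₁ then Gp else 0) := by
            exact Finset.sum_congr rfl fun c _ => key3 c
        _ = ∑ c ∈ Finset.univ.filter (fun c : V n => c ∈ perp T ∧ c ∉ T ⊔ L₁), Gp := by
            rw [Finset.sum_filter]
        _ = (((2^(2*n - k) - 2^n : ℕ)) : ℚ) * Gp := by
            rw [Finset.sum_const, hCcard, nsmul_eq_mul]
        _ = (((2:ℚ)^(2*n - k) - 2^n)) * Gp := by rw [c2]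
    have hden : (2:ℚ)^m - 2^k ≠ 0 := sub_ne_zero.2 (ne_of_gt (two_pow_lt hkm))
    rw [Finset.prod_eq_prod_Ico_succ_bot hkm, ← hGp, div_mul_eq_mul_div, eq_div_iff hden]
    linarith [hmain]

end Stmt5Aux

namespace Stmt5Aux

lemma symp_zero_left {n : ℕ} (y : V n) : symp 0 y = 0 := by
  have := symp_add_left (0 : V n) 0 y
  rw [add_zero] at this
  linear_combination (norm := abel) -this

lemma add_self_V {n : ℕ} (a : V n) : a + a = 0 := by
  have : a + a = (1 + 1 : F2) • a := by rw [add_smul, one_smul]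
  rw [this, show (1 + 1 : F2) = 0 from rfl, zero_smul]

/-- number of valid S containing both a and b -/
noncomputable def Ncount (n m : ℕ) (L₁ : Submodule F2 (V n)) (a b : V n) : ℕ :=
  Nat.card {S : Submodule F2 (V n) //
    (IsIsotropic S ∧ finrank F2 S = m ∧ S ⊓ L₁ = ⊥) ∧ a ∈ S ∧ b ∈ S}

lemma Ncount_eq_NN {n m : ℕ} (L₁ : Submodule F2 (V n)) {a b : V n} {T : Submodule F2 (V n)}
    (h : ∀ S : Submodule F2 (V n), (a ∈ S ∧ b ∈ S) ↔ T ≤ S) :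
    Ncount n m L₁ a b = NN n m L₁ T :=
  Nat.card_congr (Equiv.subtypeEquivRight fun S => and_congr_right fun _ => h S)

lemma Ncount_zero_zero {n m : ℕ} (L₁ : Submodule F2 (V n)) :
    Ncount n m L₁ 0 0 = NN n m L₁ (⊥ : Submodule F2 (V n)) :=
  Ncount_eq_NN L₁ fun S => by
    simp [Submodule.zero_mem]

lemma Ncount_left_L1 {n m : ℕ} (L₁ : Submodule F2 (V n)) {a : V n} (b : V n)
    (ha : a ∈ L₁) (ha0 : a ≠ 0) : Ncount n m L₁ a b = 0 := by
  rw [Ncount, Nat.card_eq_zero]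
  left
  refine ⟨fun x => ?_⟩
  obtain ⟨S, ⟨-, -, hSL⟩, haS, -⟩ := x
  have : a ∈ S ⊓ L₁ := ⟨haS, ha⟩
  rw [hSL] at this
  exact ha0 (by simpa using this)

lemma Ncount_right_L1 {n m : ℕ} (L₁ : Submodule F2 (V n)) (a : V n) {b : V n}
    (hb : b ∈ L₁) (hb0 : b ≠ 0) : Ncount n m L₁ a b = 0 := by
  rw [Ncount, Nat.card_eq_zero]
  left
  refine ⟨fun x => ?_⟩
  obtain ⟨S, ⟨-, -, hSL⟩, -, hbS⟩ := x
  have : b ∈ S ⊓ L₁ := ⟨hbS, hb⟩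
  rw [hSL] at this
  exact hb0 (by simpa using this)

lemma Ncount_sum_L1 {n m : ℕ} (L₁ : Submodule F2 (V n)) {a b : V n}
    (hab : a + b ∈ L₁) (hne : a ≠ b) : Ncount n m L₁ a b = 0 := by
  rw [Ncount, Nat.card_eq_zero]
  left
  refine ⟨fun x => ?_⟩
  obtain ⟨S, ⟨-, -, hSL⟩, haS, hbS⟩ := x
  have : a + b ∈ S ⊓ L₁ := ⟨Submodule.add_mem S haS hbS, hab⟩
  rw [hSL] at this
  have h0 : a + b = 0 := by simpa using this
  apply hne
  calc a = a + (a + b) := by rw [h0, add_zero]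
    _ = (a + a) + b := by abel
    _ = b := by rw [add_self_V, zero_add]

lemma span_singleton_isotropic {n : ℕ} (a : V n) :
    IsIsotropic (Submodule.span F2 {a}) := by
  intro x hx y hy
  obtain ⟨s, rfl⟩ := Submodule.mem_span_singleton.1 hx
  obtain ⟨t, rfl⟩ := Submodule.mem_span_singleton.1 hy
  rw [symp_smul_left, symp_smul_right', symp_self]
  ring

lemma span_singleton_inf_L1 {n : ℕ} {L₁ : Submodule F2 (V n)} {a : V n} (ha : a ∉ L₁) :
    Submodule.span F2 {a} ⊓ L₁ = ⊥ := by
  rw [eq_bot_iff]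
  rintro x ⟨hx1, hx2⟩
  obtain ⟨s, rfl⟩ := Submodule.mem_span_singleton.1 hx1
  rcases f2_cases s with rfl | rfl
  · simp
  · rw [one_smul] at hx2; exact absurd hx2 ha

lemma mem_span_pair_cases {n : ℕ} {a b x : V n} (hx : x ∈ Submodule.span F2 {a, b}) :
    x = 0 ∨ x = a ∨ x = b ∨ x = a + b := by
  obtain ⟨s, t, rfl⟩ := Submodule.mem_span_pair.1 hx
  rcases f2_cases s with rfl | rfl <;> rcases f2_cases t with rfl | rfl <;> simp

lemma span_pair_isotropic {n : ℕ} {a b : V n} (hab : symp a b = 0) :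
    IsIsotropic (Submodule.span F2 {a, b}) := by
  have hba : symp b a = 0 := by rw [symp_comm]; exact hab
  intro x hx y hy
  obtain ⟨s, t, rfl⟩ := Submodule.mem_span_pair.1 hx
  obtain ⟨u, v, rfl⟩ := Submodule.mem_span_pair.1 hy
  simp only [symp_add_left, symp_add_right, symp_smul_left, symp_smul_right']
  rw [symp_self, symp_self, hab, hba]
  ring

lemma span_pair_inf_L1 {n : ℕ} {L₁ : Submodule F2 (V n)} {a b : V n}
    (ha : a ∉ L₁) (hb : b ∉ L₁) (hab : a + b ∉ L₁) :
    Submodule.span F2 {a, b} ⊓ L₁ = ⊥ := by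
  rw [eq_bot_iff]
  rintro x ⟨hx1, hx2⟩
  rcases mem_span_pair_cases hx1 with rfl | rfl | rfl | rfl
  · simp
  · exact absurd hx2 ha
  · exact absurd hx2 hb
  · exact absurd hx2 hab

lemma finrank_span_pair {n : ℕ} {a b : V n} (ha0 : a ≠ 0) (hb0 : b ≠ 0) (hne : a ≠ b) :
    finrank F2 (Submodule.span F2 {a, b} : Submodule F2 (V n)) = 2 := by
  have hsplit : Submodule.span F2 {a, b} = Submodule.span F2 {a} ⊔ Submodule.span F2 {b} := by
    rw [show ({a, b} : Set (V n)) = insert a {b} from rfl, Submodule.span_insert]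
  have hinf : Submodule.span F2 {a} ⊓ Submodule.span F2 {b} = ⊥ := by
    rw [eq_bot_iff]
    rintro x ⟨hx1, hx2⟩
    obtain ⟨s, rfl⟩ := Submodule.mem_span_singleton.1 hx1
    obtain ⟨t, hst⟩ := Submodule.mem_span_singleton.1 hx2
    rcases f2_cases s with rfl | rfl
    · simp
    · exfalso
      rw [one_smul] at hst
      rcases f2_cases t with rfl | rfl
      · rw [zero_smul] at hst; exact ha0 hst.symm
      · rw [one_smul] at hst; exact hne hst.symm
  have h := Submodule.finrank_sup_add_finrank_inf_eq
    (Submodule.span F2 {a}) (Submodule.span F2 {b})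
  rw [hinf, finrank_bot, finrank_span_singleton ha0, finrank_span_singleton hb0] at h
  rw [hsplit]
  omega

lemma Ncount_single₁ {n m : ℕ} (L₁ : Submodule F2 (V n)) (a : V n) :
    Ncount n m L₁ a 0 = NN n m L₁ (Submodule.span F2 {a}) :=
  Ncount_eq_NN L₁ fun S => by
    simp [Submodule.span_singleton_le_iff_mem, Submodule.zero_mem]

lemma Ncount_single₂ {n m : ℕ} (L₁ : Submodule F2 (V n)) (a : V n) :
    Ncount n m L₁ 0 a = NN n m L₁ (Submodule.span F2 {a}) :=
  Ncount_eq_NN L₁ fun S => by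
    simp [Submodule.span_singleton_le_iff_mem, Submodule.zero_mem]

lemma Ncount_single₃ {n m : ℕ} (L₁ : Submodule F2 (V n)) (a : V n) :
    Ncount n m L₁ a a = NN n m L₁ (Submodule.span F2 {a}) :=
  Ncount_eq_NN L₁ fun S => by
    simp [Submodule.span_singleton_le_iff_mem]

lemma Ncount_pair {n m : ℕ} (L₁ : Submodule F2 (V n)) (a b : V n) :
    Ncount n m L₁ a b = NN n m L₁ (Submodule.span F2 {a, b}) :=
  Ncount_eq_NN L₁ fun S => by
    rw [Submodule.span_le, Set.insert_subset_iff, Set.singleton_subset_iff]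
    rfl

end Stmt5Aux

namespace Stmt5Aux

noncomputable def Gval (n m k : ℕ) : ℚ :=
  ∏ j ∈ Finset.Ico k m, (((2:ℚ) ^ (2*n - j) - 2 ^ n) / ((2:ℚ) ^ m - 2 ^ j))

lemma bot_isotropic {n : ℕ} : IsIsotropic (⊥ : Submodule F2 (V n)) := by
  intro x hx y hy
  have : x = 0 := by simpa using hx
  rw [this, symp_zero_left]

lemma Gval_pos {n m : ℕ} (hm : m ≤ n) (k : ℕ) : 0 < Gval n m k := by
  apply Finset.prod_pos
  intro j hj
  have hjm : j < m := (Finset.mem_Ico.1 hj).2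
  apply div_pos
  · exact sub_pos.2 (two_pow_lt (by omega))
  · exact sub_pos.2 (two_pow_lt (by omega))

lemma NN_val {n m : ℕ} (hm : m ≤ n) {L₁ : Submodule F2 (V n)} (hL₁ : IsLagrangian L₁)
    {T : Submodule F2 (V n)} (hT : IsIsotropic T) (hTL : T ⊓ L₁ = ⊥) :
    (NN n m L₁ T : ℚ) = if finrank F2 T ≤ m then Gval n m (finrank F2 T) else 0 := by
  by_cases h : finrank F2 T ≤ m
  · rw [if_pos h]
    exact NN_eq hm L₁ hL₁ (m - finrank F2 T) T hT hTL (by omega)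
  · rw [if_neg h, NN_high (by omega), Nat.cast_zero]

lemma two_pow_two_mul (n : ℕ) : (2:ℚ) ^ (2*n) = 2^n * 2^n := by
  rw [two_mul, pow_add]

lemma two_pow_two_mul_sub_one {n : ℕ} (hn : 1 ≤ n) : (2:ℚ) ^ (2*n - 1) = 2^n * 2^n / 2 := by
  have h : 2*n - 1 + 1 = 2*n := by omega
  have := pow_succ (2:ℚ) (2*n - 1)
  rw [h, two_pow_two_mul] at this
  rw [eq_div_iff (by norm_num : (2:ℚ) ≠ 0)]
  linarith [this]

lemma q1_val {n m : ℕ} (hn : 2 ≤ n) (hm : m ≤ n) :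
    (if 1 ≤ m then Gval n m 1 else 0)
      = (((2:ℚ)^m - 1) / ((2:ℚ)^n * ((2:ℚ)^n - 1))) * Gval n m 0 := by
  have hb0 : (2:ℚ)^n ≠ 0 := by positivity
  have hb1 : (2:ℚ)^n - 1 ≠ 0 := by
    have : (1:ℚ) < 2^n := by simpa using two_pow_lt (by omega : 0 < n)
    exact sub_ne_zero.2 (ne_of_gt this)
  have e0 : (2:ℚ)^(2*n - 0) - 2^n = 2^n*((2:ℚ)^n - 1) := by
    rw [Nat.sub_zero, two_pow_two_mul]; ring
  by_cases h : 1 ≤ m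
  · rw [if_pos h]
    have hsplit : Gval n m 0 = (((2:ℚ)^(2*n - 0) - 2^n) / ((2:ℚ)^m - 2^0)) * Gval n m 1 :=
      Finset.prod_eq_prod_Ico_succ_bot (by omega) _
    rw [hsplit, e0, pow_zero]
    have h1 : (2:ℚ)^m - 1 ≠ 0 := sub_ne_zero.2 (ne_of_gt (by simpa using two_pow_lt h))
    field_simp
  · rw [if_neg h]
    have hm0 : m = 0 := by omega
    rw [hm0]
    norm_num

lemma q2_val {n m : ℕ} (hn : 2 ≤ n) (hm : m ≤ n) :
    (if 2 ≤ m then Gval n m 2 else 0)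
      = ((((2:ℚ)^m - 1) * ((2:ℚ)^m - 2))
          / (((2:ℚ)^n * ((2:ℚ)^n - 1)) * ((2:ℚ)^n * (((2:ℚ)^n - 2)/2)))) * Gval n m 0 := by
  have hb0 : (2:ℚ)^n ≠ 0 := by positivity
  have hb1 : (2:ℚ)^n - 1 ≠ 0 := by
    have : (1:ℚ) < 2^n := by simpa using two_pow_lt (by omega : 0 < n)
    exact sub_ne_zero.2 (ne_of_gt this)
  have hb2 : (2:ℚ)^n - 2 ≠ 0 := by
    have : (2:ℚ) < 2^n := by simpa using two_pow_lt (by omega : 1 < n)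
    exact sub_ne_zero.2 (ne_of_gt this)
  have hb2' : ((2:ℚ)^n - 2)/2 ≠ 0 := by
    intro h; apply hb2; linarith [(div_eq_zero_iff.1 h)]
  have e0 : (2:ℚ)^(2*n - 0) - 2^n = 2^n*((2:ℚ)^n - 1) := by
    rw [Nat.sub_zero, two_pow_two_mul]; ring
  have e1 : (2:ℚ)^(2*n - 1) - 2^n = 2^n*(((2:ℚ)^n - 2)/2) := by
    rw [two_pow_two_mul_sub_one (by omega : 1 ≤ n)]; ring
  by_cases h : 2 ≤ m
  · rw [if_pos h]
    have hsplit0 : Gval n m 0 = (((2:ℚ)^(2*n - 0) - 2^n) / ((2:ℚ)^m - 2^0)) * Gval n m 1 :=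
      Finset.prod_eq_prod_Ico_succ_bot (by omega) _
    have hsplit1 : Gval n m 1 = (((2:ℚ)^(2*n - 1) - 2^n) / ((2:ℚ)^m - 2^1)) * Gval n m 2 :=
      Finset.prod_eq_prod_Ico_succ_bot (by omega) _
    rw [hsplit0, hsplit1, e0, e1, pow_zero, pow_one]
    have h1 : (2:ℚ)^m - 1 ≠ 0 :=
      sub_ne_zero.2 (ne_of_gt (by simpa using two_pow_lt (by omega : 0 < m)))
    have h2 : (2:ℚ)^m - 2 ≠ 0 := by
      have : (2:ℚ) < 2^m := by simpa using two_pow_lt (by omega : 1 < m)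
      exact sub_ne_zero.2 (ne_of_gt this)
    field_simp
  · rw [if_neg h]
    rcases (show m = 0 ∨ m = 1 by omega) with rfl | rfl <;> norm_num

lemma mu_form (n κ m : ℕ) :
    mu n κ m = 1 + 3*(1 - (2:ℚ)^κ/2^n)*(((2:ℚ)^m - 1)/((2:ℚ)^n - 1))
      + 2*(1 - (2:ℚ)^κ/2^n)*(1 - 2*((2:ℚ)^κ/2^n))
          * ((((2:ℚ)^m - 1)*((2:ℚ)^m/2 - 1))/(((2:ℚ)^n - 1)*((2:ℚ)^n/2 - 1))) := by
  have h2 : (2:ℚ) ≠ 0 := by norm_num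
  have e1 : (2:ℚ)^((κ:ℤ) - (n:ℤ)) = 2^κ/2^n := by
    rw [zpow_sub₀ h2, zpow_natCast, zpow_natCast]
  have e2 : (2:ℚ)^((κ:ℤ) - (n:ℤ) + 1) = 2*((2:ℚ)^κ/2^n) := by
    rw [zpow_add₀ h2, e1, zpow_one]; ring
  have e3 : (2:ℚ)^((m:ℤ) - 1) = 2^m/2 := by
    rw [zpow_sub₀ h2, zpow_natCast, zpow_one]
  have e4 : (2:ℚ)^((n:ℤ) - 1) = 2^n/2 := by
    rw [zpow_sub₀ h2, zpow_natCast, zpow_one]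
  rw [mu, e1, e2, e3, e4]
  all_goals ring

lemma rhs_form (n m : ℕ) :
    1 + 3 * (2:ℚ) ^ ((m:ℤ) - (n:ℤ)) + (2:ℚ) ^ (2*(m:ℤ) - 2*(n:ℤ) + 1)
      = 1 + 3*((2:ℚ)^m/2^n) + 2*((2:ℚ)^m/2^n)*((2:ℚ)^m/2^n) := by
  have h2 : (2:ℚ) ≠ 0 := by norm_num
  have e1 : (2:ℚ)^((m:ℤ) - (n:ℤ)) = 2^m/2^n := by
    rw [zpow_sub₀ h2, zpow_natCast, zpow_natCast]
  have e5 : 2*(m:ℤ) - 2*(n:ℤ) + 1 = ((m:ℤ) - n) + ((m:ℤ) - n) + 1 := by ring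
  rw [e5, zpow_add₀ h2, zpow_add₀ h2, e1, zpow_one]
  all_goals ring

lemma algebra_eq (a b c : ℚ) (hb : 2 < b) :
    1 + 3*(b - c)*((a - 1)/(b*(b - 1)))
        + (b - c)*(b - 2*c)*(((a - 1)*(a - 2))/((b*(b - 1))*(b*((b - 2)/2))))
      = 1 + 3*(1 - c/b)*((a - 1)/(b - 1))
        + 2*(1 - c/b)*(1 - 2*(c/b))*(((a - 1)*(a/2 - 1))/((b - 1)*(b/2 - 1))) := by
  have h0 : b ≠ 0 := by linarith
  have h1 : b - 1 ≠ 0 := by intro h; nlinarith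
  have h3 : b - 2 ≠ 0 := by intro h; nlinarith
  rw [show b/2 - 1 = (b-2)/2 by ring]
  have h4 : (b-2)/2 ≠ 0 := by
    intro h; apply h3; linarith [(div_eq_zero_iff.1 h)]
  field_simp

lemma algebra_ineq (a b c : ℚ) (ha1 : 1 ≤ a) (hab : a ≤ b) (hc1 : 1 ≤ c) (hcb : c ≤ b)
    (hb4 : 4 ≤ b) (haor : a = 1 ∨ 2 ≤ a) :
    1 + 3*(1 - c/b)*((a - 1)/(b - 1))
        + 2*(1 - c/b)*(1 - 2*(c/b))*(((a - 1)*(a/2 - 1))/((b - 1)*(b/2 - 1)))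
      ≤ 1 + 3*(a/b) + 2*(a/b)*(a/b) := by
  have hb0 : (0:ℚ) < b := by linarith
  have hb1 : (0:ℚ) < b - 1 := by linarith
  have hb2 : (0:ℚ) < b/2 - 1 := by linarith
  have hu0 : 0 < c/b := div_pos (by linarith) hb0
  have hu1 : c/b ≤ 1 := (div_le_one hb0).2 hcb
  have t2 : (1 - c/b)*((a - 1)/(b - 1)) ≤ a/b := by
    have e1 : 1 - c/b ≤ 1 := by linarith
    have e2 : 0 ≤ (a - 1)/(b - 1) := div_nonneg (by linarith) (by linarith)
    have e3 : (a - 1)/(b - 1) ≤ a/b := by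
      rw [div_le_div_iff₀ hb1 hb0]
      nlinarith
    calc (1 - c/b)*((a - 1)/(b - 1)) ≤ 1*((a - 1)/(b - 1)) :=
          mul_le_mul_of_nonneg_right e1 e2
      _ = (a - 1)/(b - 1) := one_mul _
      _ ≤ a/b := e3
  have t3 : (1 - c/b)*(1 - 2*(c/b))*(((a - 1)*(a/2 - 1))/((b - 1)*(b/2 - 1)))
      ≤ (a/b)*(a/b) := by
    have hX : 0 ≤ ((a - 1)*(a/2 - 1))/((b - 1)*(b/2 - 1)) := by
      rcases haor with rfl | h2a
      · norm_num
      · apply div_nonneg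
        · nlinarith
        · nlinarith
    have hcoef : (1 - c/b)*(1 - 2*(c/b)) ≤ 1 := by nlinarith
    have step2 : ((a - 1)*(a/2 - 1))/((b - 1)*(b/2 - 1)) ≤ (a/b)*(a/b) := by
      rcases haor with rfl | h2a
      · have hz : (((1:ℚ) - 1)*((1:ℚ)/2 - 1))/((b - 1)*(b/2 - 1)) = 0 := by norm_num
        rw [hz]
        positivity
      · rw [div_mul_div_comm, div_le_div_iff₀ (by nlinarith : (0:ℚ) < (b - 1)*(b/2 - 1))
          (by positivity : (0:ℚ) < b*b)]
        have h1 : (a - 1)*b ≤ a*(b - 1) := by nlinarith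
        have h2 : (a - 2)*b ≤ a*(b - 2) := by nlinarith
        have hprod : ((a - 1)*b)*((a - 2)*b) ≤ (a*(b - 1))*(a*(b - 2)) :=
          mul_le_mul h1 h2 (by nlinarith) (by nlinarith)
        nlinarith [hprod]
    calc (1 - c/b)*(1 - 2*(c/b))*(((a - 1)*(a/2 - 1))/((b - 1)*(b/2 - 1)))
        ≤ 1*(((a - 1)*(a/2 - 1))/((b - 1)*(b/2 - 1))) :=
          mul_le_mul_of_nonneg_right hcoef hX
      _ = ((a - 1)*(a/2 - 1))/((b - 1)*(b/2 - 1)) := one_mul _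
      _ ≤ (a/b)*(a/b) := step2
  linarith

end Stmt5Aux


open Stmt5Aux

/-- For Lagrangian `L₁, L₂ ⊂ 𝔽₂^{2n}` with `κ = dim(L₁ ∩ L₂)` and `0 ≤ m ≤ n`, the
average of `|S ∩ L₂|²` over all `m`-dimensional isotropic subspaces `S` with
`S ∩ L₁ = {0}` equals `μ(n,κ,m)`, and `μ(n,κ,m) ≤ 1 + 3·2^{m−n} + 2^{2m−2n+1}`. -/
theorem stmt5 (n m : ℕ) (hn : 2 ≤ n) (hm : m ≤ n)
    (L₁ L₂ : Submodule F2 (V n)) (hL₁ : IsLagrangian L₁) (hL₂ : IsLagrangian L₂) :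
    (∑ᶠ S ∈ {S : Submodule F2 (V n) |
          IsIsotropic S ∧ Module.finrank F2 S = m ∧ S ⊓ L₁ = ⊥},
        (Nat.card ↥(S ⊓ L₂) : ℚ) ^ 2)
        / (Nat.card {S : Submodule F2 (V n) //
            IsIsotropic S ∧ Module.finrank F2 S = m ∧ S ⊓ L₁ = ⊥} : ℚ)
      = mu n (Module.finrank F2 ↥(L₁ ⊓ L₂)) m
    ∧ mu n (Module.finrank F2 ↥(L₁ ⊓ L₂)) m
        ≤ 1 + 3 * (2 : ℚ) ^ ((m : ℤ) - (n : ℤ)) +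
            (2 : ℚ) ^ (2 * (m : ℤ) - 2 * (n : ℤ) + 1) := by
  classical
  haveI : Fintype (Submodule F2 (V n)) := Fintype.ofFinite _
  set κ := finrank F2 ↥(L₁ ⊓ L₂) with hκdef
  have hκn : κ ≤ n := by
    have h1 : finrank F2 ↥(L₁ ⊓ L₂) ≤ finrank F2 ↥L₁ := Submodule.finrank_mono inf_le_left
    rw [hL₁.2] at h1
    omega
  have hone_le : ∀ k : ℕ, (1:ℚ) ≤ 2^k := fun k => by
    have := two_pow_le (Nat.zero_le k); simpa using this
  constructor
  swap
  · -- the inequality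
    rw [mu_form n κ m, rhs_form n m]
    apply algebra_ineq ((2:ℚ)^m) ((2:ℚ)^n) ((2:ℚ)^κ) (hone_le m) (two_pow_le hm)
      (hone_le κ) (two_pow_le hκn)
    · have : (2:ℚ)^2 ≤ 2^n := two_pow_le hn
      norm_num at this
      linarith
    · rcases Nat.eq_zero_or_pos m with rfl | hpos
      · left; norm_num
      · right
        have : (2:ℚ)^1 ≤ 2^m := two_pow_le hpos
        simpa using this
  · -- the equality
    have hfin : {S : Submodule F2 (V n) |
        IsIsotropic S ∧ finrank F2 S = m ∧ S ⊓ L₁ = ⊥}.Finite := Set.toFinite _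
    rw [finsum_mem_eq_finite_toFinset_sum _ hfin]
    set FFf := hfin.toFinset with hFFf
    have hmemFF : ∀ S : Submodule F2 (V n),
        S ∈ FFf ↔ (IsIsotropic S ∧ finrank F2 S = m ∧ S ⊓ L₁ = ⊥) := fun S => by
      rw [hFFf, Set.Finite.mem_toFinset]; rfl
    -- constants
    have hq0 : ((NN n m L₁ ⊥ : ℕ) : ℚ) = Gval n m 0 := by
      have := NN_val hm hL₁ (T := ⊥) bot_isotropic (by simp)
      rwa [finrank_bot, if_pos (Nat.zero_le m)] at this
    have hq0pos : 0 < Gval n m 0 := Gval_pos hm 0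
    set q1 : ℚ := if 1 ≤ m then Gval n m 1 else 0 with hq1def
    set q2 : ℚ := if 2 ≤ m then Gval n m 2 else 0 with hq2def
    have hsingle : ∀ a : V n, a ∉ L₁ → a ≠ 0 →
        ((NN n m L₁ (Submodule.span F2 {a}) : ℕ) : ℚ) = q1 := by
      intro a haL ha0
      have := NN_val hm hL₁ (span_singleton_isotropic a) (span_singleton_inf_L1 haL)
      rwa [finrank_span_singleton ha0] at this
    have hpair : ∀ a b : V n, a ∈ L₂ → b ∈ L₂ → a ∉ L₁ → b ∉ L₁ → a ≠ 0 → b ≠ 0 →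
        a ≠ b → a + b ∉ L₁ →
        ((NN n m L₁ (Submodule.span F2 {a, b}) : ℕ) : ℚ) = q2 := by
      intro a b haL₂ hbL₂ haL hbL ha0 hb0 hne hab
      have hsymp : symp a b = 0 := hL₂.1 a haL₂ b hbL₂
      have := NN_val hm hL₁ (span_pair_isotropic hsymp) (span_pair_inf_L1 haL hbL hab)
      rwa [finrank_span_pair ha0 hb0 hne] at this
    -- the finsets
    have card_filter_mem : ∀ W : Submodule F2 (V n),
        (Finset.univ.filter (fun c : V n => c ∈ W)).card = 2 ^ finrank F2 W := fun W => by
      rw [← Fintype.card_subtype, ← Nat.card_eq_fintype_card, card_submodule]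
    set L₂f := Finset.univ.filter (fun c : V n => c ∈ L₂) with hL₂f
    set Kf := Finset.univ.filter (fun c : V n => c ∈ L₁ ⊓ L₂) with hKf
    set Df := L₂f.filter (fun c => c ∉ L₁) with hDf
    have hmemL₂f : ∀ c : V n, c ∈ L₂f ↔ c ∈ L₂ := fun c => by
      rw [hL₂f]; simp
    have hmemKf : ∀ c : V n, c ∈ Kf ↔ (c ∈ L₁ ∧ c ∈ L₂) := fun c => by
      rw [hKf]; simp [Submodule.mem_inf]
    have hL₂card : L₂f.card = 2^n := by rw [hL₂f, card_filter_mem, hL₂.2]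
    have hKcard : Kf.card = 2^κ := by rw [hKf, card_filter_mem, hκdef]
    have hKsub : Kf ⊆ L₂f := fun c hc => (hmemL₂f c).2 ((hmemKf c).1 hc).2
    have hDfalt : Df = L₂f \ Kf := by
      ext c
      rw [hDf, Finset.mem_sdiff, Finset.mem_filter, hmemKf, hmemL₂f]
      constructor
      · rintro ⟨h1, h2⟩; exact ⟨h1, fun h => h2 h.1⟩
      · rintro ⟨h1, h2⟩; exact ⟨h1, fun h => h2 ⟨h, h1⟩⟩
    have hDcard : Df.card = 2^n - 2^κ := by
      rw [hDfalt, Finset.card_sdiff_of_subset hKsub, hL₂card, hKcard]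
    have hκle : (2:ℕ)^κ ≤ 2^n := by
      rw [← hKcard, ← hL₂card]; exact Finset.card_le_card hKsub
    have hDq : ((Df.card : ℕ) : ℚ) = (2:ℚ)^n - 2^κ := by
      rw [hDcard, Nat.cast_sub hκle]; push_cast; ring
    have h0L₂f : (0 : V n) ∈ L₂f := (hmemL₂f 0).2 (Submodule.zero_mem L₂)
    -- numerator as a double sum of Ncounts
    have hnum : ∑ S ∈ FFf, (Nat.card ↥(S ⊓ L₂) : ℚ)^2
        = ∑ a ∈ L₂f, ∑ b ∈ L₂f, ((Ncount n m L₁ a b : ℕ) : ℚ) := by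
      have e1 : ∀ S ∈ FFf, (Nat.card ↥(S ⊓ L₂) : ℚ)^2
          = ∑ a ∈ L₂f, ∑ b ∈ L₂f,
              (if a ∈ S then (1:ℚ) else 0) * (if b ∈ S then 1 else 0) := by
        intro S _
        have hc : (Nat.card ↥(S ⊓ L₂) : ℚ) = ∑ a ∈ L₂f, (if a ∈ S then (1:ℚ) else 0) := by
          have h1 : Nat.card ↥(S ⊓ L₂) = (L₂f.filter (fun c => c ∈ S)).card := by
            rw [Nat.card_eq_fintype_card, Fintype.card_subtype, hL₂f,
              Finset.filter_filter]
            congr 1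
            ext c
            simp only [Finset.mem_filter, Finset.mem_univ, true_and, Submodule.mem_inf]
            tauto
          rw [h1, Finset.card_filter, Nat.cast_sum]
          simp
        rw [pow_two, hc, Finset.sum_mul_sum]
      rw [Finset.sum_congr rfl e1, Finset.sum_comm]
      refine Finset.sum_congr rfl fun a _ => ?_
      rw [Finset.sum_comm]
      refine Finset.sum_congr rfl fun b _ => ?_
      have e2 : ∀ S : Submodule F2 (V n), (if a ∈ S then (1:ℚ) else 0) * (if b ∈ S then 1 else 0)
          = if a ∈ S ∧ b ∈ S then (1:ℚ) else 0 := fun S => by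
        rw [ite_zero_mul_ite_zero, one_mul]
      rw [Finset.sum_congr rfl fun S _ => e2 S, Finset.sum_boole]
      congr 1
      rw [Ncount, Nat.card_eq_fintype_card, Fintype.card_subtype]
      congr 1
      ext S
      simp only [Finset.mem_filter, Finset.mem_univ, true_and, hmemFF S]
    -- inner sum for a = 0
    have hinner0 : ∑ b ∈ L₂f, ((Ncount n m L₁ 0 b : ℕ) : ℚ)
        = Gval n m 0 + (Df.card : ℚ) * q1 := by
      have hpt : ∀ b ∈ L₂f, ((Ncount n m L₁ 0 b : ℕ) : ℚ)
          = (if b = 0 then Gval n m 0 else 0) + (if b ∉ L₁ then q1 else 0) := by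
        intro b hbf
        by_cases hb0 : b = 0
        · subst hb0
          rw [Ncount_zero_zero, hq0, if_pos rfl,
            if_neg (fun h => h (Submodule.zero_mem L₁)), add_zero]
        · by_cases hbL : b ∈ L₁
          · rw [Ncount_right_L1 L₁ 0 hbL hb0, if_neg hb0, if_neg (fun h => h hbL)]
            norm_num
          · rw [Ncount_single₂, hsingle b hbL hb0, if_neg hb0, if_pos hbL, zero_add]
      rw [Finset.sum_congr rfl hpt, Finset.sum_add_distrib,
        Finset.sum_ite_eq' L₂f (0 : V n) (fun _ => Gval n m 0), if_pos h0L₂f,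
        ← Finset.sum_filter, Finset.sum_const, ← hDf, nsmul_eq_mul]
    -- inner sum for a ∈ D
    have hinnerA : ∀ a : V n, a ∈ L₂ → a ∉ L₁ →
        ∑ b ∈ L₂f, ((Ncount n m L₁ a b : ℕ) : ℚ)
          = 2*q1 + ((2:ℚ)^n - ((2:ℚ)^κ + (2:ℚ)^κ))*q2 := by
      intro a haL₂ haL
      have ha0 : a ≠ 0 := fun h => haL (h ▸ Submodule.zero_mem L₁)
      have haf : a ∈ L₂f := (hmemL₂f a).2 haL₂
      set aK := Kf.image (fun k => a + k) with haKdef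
      have haKcard : aK.card = 2^κ := by
        rw [haKdef, Finset.card_image_of_injective _ (add_right_injective a), hKcard]
      have hmemaK : ∀ b : V n, b ∈ aK ↔ (a + b ∈ L₁ ∧ a + b ∈ L₂) := by
        intro b
        rw [haKdef]
        constructor
        · intro hx
          obtain ⟨k, hk, rfl⟩ := Finset.mem_image.1 hx
          obtain ⟨hk1, hk2⟩ := (hmemKf k).1 hk
          have : a + (a + k) = k := by
            rw [← add_assoc, add_self_V, zero_add]
          rw [this]
          exact ⟨hk1, hk2⟩
        · intro ⟨h1, h2⟩
          refine Finset.mem_image.2 ⟨a + b, (hmemKf _).2 ⟨h1, h2⟩, ?_⟩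
          rw [← add_assoc, add_self_V, zero_add]
      have haKsub : aK ⊆ L₂f := by
        intro x hx
        obtain ⟨k, hk, rfl⟩ := Finset.mem_image.1 hx
        exact (hmemL₂f _).2 (Submodule.add_mem L₂ haL₂ ((hmemKf k).1 hk).2)
      have hdisj : Disjoint Kf aK := by
        rw [Finset.disjoint_left]
        intro x hxK hxA
        obtain ⟨hx1, hx2⟩ := (hmemKf x).1 hxK
        obtain ⟨hy1, hy2⟩ := (hmemaK x).1 hxA
        apply haL
        have : a = x + (a + x) := by
          rw [show x + (a + x) = a + (x + x) by abel, add_self_V, add_zero]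
        rw [this]
        exact Submodule.add_mem L₁ hx1 hy1
      have hUsub : Kf ∪ aK ⊆ L₂f := Finset.union_subset hKsub haKsub
      have hUcard : (Kf ∪ aK).card = 2^κ + 2^κ := by
        rw [Finset.card_union_of_disjoint hdisj, hKcard, haKcard]
      have hab_le : 2^κ + 2^κ ≤ 2^n := by
        rw [← hUcard, ← hL₂card]; exact Finset.card_le_card hUsub
      have hGcard : (L₂f.filter (fun b => b ∉ Kf ∪ aK)).card = 2^n - (2^κ + 2^κ) := by
        have heq : L₂f.filter (fun b => b ∉ Kf ∪ aK) = L₂f \ (Kf ∪ aK) := by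
          ext c
          rw [Finset.mem_filter, Finset.mem_sdiff]
        rw [heq, Finset.card_sdiff_of_subset hUsub, hL₂card, hUcard]
      have hpt : ∀ b ∈ L₂f, ((Ncount n m L₁ a b : ℕ) : ℚ)
          = ((if b = 0 then q1 else 0) + (if b = a then q1 else 0))
            + (if b ∉ Kf ∪ aK then q2 else 0) := by
        intro b hbf
        have hbL₂ : b ∈ L₂ := (hmemL₂f b).1 hbf
        by_cases hb0 : b = 0
        · subst hb0
          have h0K : (0 : V n) ∈ Kf ∪ aK :=
            Finset.mem_union_left _ ((hmemKf 0).2 ⟨Submodule.zero_mem _, Submodule.zero_mem _⟩)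
          rw [Ncount_single₁, hsingle a haL ha0, if_pos rfl,
            if_neg (fun h => ha0 h.symm), if_neg (fun h => h h0K)]
          ring
        · by_cases hba : b = a
          · subst hba
            have hbK : b ∈ Kf ∪ aK := by
              refine Finset.mem_union_right _ ((hmemaK b).2 ⟨?_, ?_⟩)
              · rw [add_self_V]; exact Submodule.zero_mem L₁
              · rw [add_self_V]; exact Submodule.zero_mem L₂
            rw [Ncount_single₃, hsingle b haL ha0, if_neg hb0, if_pos rfl,
              if_neg (fun h => h hbK)]
            ring
          · by_cases hbL : b ∈ L₁
            · have hbK : b ∈ Kf ∪ aK := Finset.mem_union_left _ ((hmemKf b).2 ⟨hbL, hbL₂⟩)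
              rw [Ncount_right_L1 L₁ a hbL hb0, if_neg hb0, if_neg hba,
                if_neg (fun h => h hbK)]
              norm_num
            · by_cases habL : a + b ∈ L₁
              · have hbK : b ∈ Kf ∪ aK := Finset.mem_union_right _
                  ((hmemaK b).2 ⟨habL, Submodule.add_mem L₂ haL₂ hbL₂⟩)
                rw [Ncount_sum_L1 L₁ habL (fun h => hba h.symm), if_neg hb0, if_neg hba,
                  if_neg (fun h => h hbK)]
                norm_num
              · have hbK : b ∉ Kf ∪ aK := by
                  intro h
                  rcases Finset.mem_union.1 h with h' | h'
                  · exact hbL ((hmemKf b).1 h').1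
                  · exact habL ((hmemaK b).1 h').1
                rw [Ncount_pair, hpair a b haL₂ hbL₂ haL hbL ha0 hb0 (fun h => hba h.symm) habL,
                  if_neg hb0, if_neg hba, if_pos hbK]
                ring
      rw [Finset.sum_congr rfl hpt, Finset.sum_add_distrib, Finset.sum_add_distrib,
        Finset.sum_ite_eq' L₂f (0 : V n) (fun _ => q1), if_pos h0L₂f,
        Finset.sum_ite_eq' L₂f a (fun _ => q1), if_pos haf,
        ← Finset.sum_filter, Finset.sum_const, hGcard, nsmul_eq_mul,
        Nat.cast_sub hab_le]
      push_cast
      ring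
    -- outer sum
    have houter : ∑ a ∈ L₂f, ∑ b ∈ L₂f, ((Ncount n m L₁ a b : ℕ) : ℚ)
        = Gval n m 0 + 3*((2:ℚ)^n - 2^κ)*q1
          + ((2:ℚ)^n - 2^κ)*((2:ℚ)^n - ((2:ℚ)^κ + (2:ℚ)^κ))*q2 := by
      have hpt : ∀ a ∈ L₂f, ∑ b ∈ L₂f, ((Ncount n m L₁ a b : ℕ) : ℚ)
          = (if a = 0 then Gval n m 0 + (Df.card : ℚ) * q1 else 0)
            + (if a ∉ L₁ then 2*q1 + ((2:ℚ)^n - ((2:ℚ)^κ + (2:ℚ)^κ))*q2 else 0) := by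
        intro a haf
        have haL₂ : a ∈ L₂ := (hmemL₂f a).1 haf
        by_cases ha0 : a = 0
        · subst ha0
          rw [hinner0, if_pos rfl, if_neg (fun h => h (Submodule.zero_mem L₁)), add_zero]
        · by_cases haL : a ∈ L₁
          · rw [if_neg ha0, if_neg (fun h => h haL), add_zero]
            apply Finset.sum_eq_zero
            intro b _
            rw [Ncount_left_L1 L₁ b haL ha0, Nat.cast_zero]
          · rw [hinnerA a haL₂ haL, if_neg ha0, if_pos haL, zero_add]
      rw [Finset.sum_congr rfl hpt, Finset.sum_add_distrib,
        Finset.sum_ite_eq' L₂f (0 : V n)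
          (fun _ => Gval n m 0 + (Df.card : ℚ) * q1), if_pos h0L₂f,
        ← Finset.sum_filter, Finset.sum_const, ← hDf, nsmul_eq_mul, hDq]
      ring
    -- denominator
    have hdenom : ((Nat.card {S : Submodule F2 (V n) //
        IsIsotropic S ∧ finrank F2 S = m ∧ S ⊓ L₁ = ⊥} : ℕ) : ℚ) = Gval n m 0 := by
      rw [← hq0]
      congr 1
      exact Nat.card_congr (Equiv.subtypeEquivRight fun S =>
        ⟨fun h => ⟨h, bot_le⟩, fun h => h.1⟩)
    rw [hnum, houter, hdenom, div_eq_iff (ne_of_gt hq0pos), mu_form n κ m,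
      hq1def, q1_val hn hm, hq2def, q2_val hn hm]
    have halg := algebra_eq ((2:ℚ)^m) ((2:ℚ)^n) ((2:ℚ)^κ)
      (by simpa using two_pow_lt (show 1 < n by omega))
    linear_combination (Gval n m 0) * halg
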